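/- Let A be a self-adjoint endomorphism of V with eigenvalues ρ_1,…,ρ_n (listed with multiplicity), and let ρ_(q) denote the minimum of Σ_{i∈S} ρ_i over all q-element subsets S ⊆ {1,…,n} (equivalently, the sum of the q smallest eigenvalues of A). Then for every alternating q-form ω on V one has ⟨𝒜_q ω, ω⟩ ≥ ρ_(q) ‖ω‖², and ρ_(q) is the least eigenvalue of 𝒜_q. -/

import Mathlib

open scoped RealInnerProductSpace Classical

/-- The operator `𝒜_q` on `q`-forms induced by an endomorphism `A` of `V`:
`(𝒜_q ω)(v_1,…,v_q) = Σ_j ω(v_1,…,A v_j,…,v_q)`. -/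
noncomputable def indA {q : ℕ} {V : Type*} [AddCommGroup V] [Module ℝ V]
    (A : V →ₗ[ℝ] V) (ω : (Fin q → V) → ℝ) : (Fin q → V) → ℝ :=
  fun v => ∑ j : Fin q, ω (Function.update v j (A (v j)))

/-- The inner product of `q`-forms: `⟨ω,τ⟩ = Σ_I ω_I τ_I`, the sum running over
increasing multi-indices `I` of length `q`. -/
noncomputable def formInner {n q : ℕ} {V : Type*} [NormedAddCommGroup V] [InnerProductSpace ℝ V]
    (b : OrthonormalBasis (Fin n) ℝ V) (ω τ : (Fin q → V) → ℝ) : ℝ :=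
  ∑ I ∈ Finset.univ.filter (fun I : Fin q → Fin n => StrictMono I),
    ω (fun k => b (I k)) * τ (fun k => b (I k))

/-- `ρ_(q)`: the minimum of `Σ_{i∈S} ρ_i` over all `q`-element subsets `S` of the
index set, i.e. the sum of the `q` smallest values of `ρ`. -/
noncomputable def minSum (n q : ℕ) (ρ : Fin n → ℝ) : ℝ :=
  sInf {x : ℝ | ∃ s : Finset (Fin n), s.card = q ∧ x = ∑ i ∈ s, ρ i}

section Aux

variable {n q : ℕ} {V : Type*} [NormedAddCommGroup V] [InnerProductSpace ℝ V]

/-- `indA A ω` as a multilinear map, when `ω` is alternating. -/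
noncomputable def indAM (A : V →ₗ[ℝ] V) (ω : AlternatingMap ℝ V ℝ (Fin q)) :
    MultilinearMap ℝ (fun _ : Fin q => V) ℝ :=
  ∑ j : Fin q, ω.toMultilinearMap.compLinearMap
    (fun i => if i = j then A else LinearMap.id)

lemma indAM_coe (A : V →ₗ[ℝ] V) (ω : AlternatingMap ℝ V ℝ (Fin q)) :
    ⇑(indAM A ω) = indA A ⇑ω := by
  funext v
  rw [indAM, MultilinearMap.sum_apply]
  refine Finset.sum_congr rfl fun j _ => ?_
  rw [MultilinearMap.compLinearMap_apply]
  have h1 : (fun i => (if i = j then A else LinearMap.id) (v i))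
      = Function.update v j (A (v j)) := by
    funext i
    rw [Function.update_apply]
    by_cases h : i = j <;> simp [h]
  rw [h1]
  rfl

lemma indA_basis (b : OrthonormalBasis (Fin n) ℝ V) (A : V →ₗ[ℝ] V)
    (ρ : Fin n → ℝ) (hAb : ∀ i, A (b i) = ρ i • b i)
    (ω : AlternatingMap ℝ V ℝ (Fin q)) (J : Fin q → Fin n) :
    indA A ⇑ω (fun k => b (J k)) = (∑ j, ρ (J j)) * ω (fun k => b (J k)) := by
  have key : ∀ j : Fin q,
      ω (Function.update (fun k => b (J k)) j (A ((fun k => b (J k)) j)))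
        = ρ (J j) * ω (fun k => b (J k)) := by
    intro j
    have h1 : A ((fun k => b (J k)) j) = ρ (J j) • (fun k => b (J k)) j := hAb (J j)
    rw [h1, ω.map_update_smul, Function.update_eq_self, smul_eq_mul]
  simp only [indA]
  rw [Finset.sum_congr rfl (fun j _ => key j), ← Finset.sum_mul]

lemma minSum_set_finite (ρ : Fin n → ℝ) :
    {x : ℝ | ∃ s : Finset (Fin n), s.card = q ∧ x = ∑ i ∈ s, ρ i}.Finite := by
  have h : {x : ℝ | ∃ s : Finset (Fin n), s.card = q ∧ x = ∑ i ∈ s, ρ i}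
      ⊆ (fun s : Finset (Fin n) => ∑ i ∈ s, ρ i) '' Set.univ := by
    rintro x ⟨s, _, rfl⟩; exact ⟨s, trivial, rfl⟩
  exact (Set.finite_univ.image _).subset h

lemma minSum_set_nonempty (hqn : q ≤ n) (ρ : Fin n → ℝ) :
    {x : ℝ | ∃ s : Finset (Fin n), s.card = q ∧ x = ∑ i ∈ s, ρ i}.Nonempty := by
  obtain ⟨t, -, ht⟩ := Finset.exists_subset_card_eq (s := (Finset.univ : Finset (Fin n))) (n := q)
    (by simpa using hqn)
  exact ⟨∑ i ∈ t, ρ i, t, ht, rfl⟩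

lemma minSum_le (ρ : Fin n → ℝ) {s : Finset (Fin n)} (hs : s.card = q) :
    minSum n q ρ ≤ ∑ i ∈ s, ρ i :=
  csInf_le (minSum_set_finite ρ).bddBelow ⟨s, hs, rfl⟩

lemma minSum_mem (hqn : q ≤ n) (ρ : Fin n → ℝ) :
    ∃ s : Finset (Fin n), s.card = q ∧ minSum n q ρ = ∑ i ∈ s, ρ i :=
  (minSum_set_nonempty hqn ρ).csInf_mem (minSum_set_finite ρ)

lemma formInner_pos (b : OrthonormalBasis (Fin n) ℝ V) (hqn : q ≤ n)
    {ω : AlternatingMap ℝ V ℝ (Fin q)} (hω : ω ≠ 0) :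
    0 < formInner b ⇑ω ⇑ω := by
  have hex : ∃ I : Fin q → Fin n, StrictMono I ∧ ω (fun k => b (I k)) ≠ 0 := by
    by_contra hc
    push_neg at hc
    apply hω
    apply Module.Basis.ext_alternating b.toBasis
    intro v hv
    simp only [OrthonormalBasis.coe_toBasis, AlternatingMap.zero_apply]
    set t : Finset (Fin n) := Finset.image v Finset.univ with ht
    have htc : t.card = q := by
      rw [ht, Finset.card_image_of_injective _ hv, Finset.card_univ, Fintype.card_fin]
    set u : Fin q → Fin n := fun k => ((t.orderIsoOfFin htc k : t) : Fin n) with hu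
    have hum : StrictMono u := fun a c hac =>
      Subtype.coe_lt_coe.mpr ((t.orderIsoOfFin htc).strictMono hac)
    have hv' : ∀ j, v j ∈ t := fun j => Finset.mem_image_of_mem v (Finset.mem_univ j)
    have hbij : Function.Bijective (fun j => (⟨v j, hv' j⟩ : t)) := by
      rw [Fintype.bijective_iff_injective_and_card]
      refine ⟨fun a c hac => hv (congrArg Subtype.val hac), by simp [htc]⟩
    set σ : Equiv.Perm (Fin q) :=
      (Equiv.ofBijective _ hbij).trans (t.orderIsoOfFin htc).toEquiv.symm with hσ
    have hvu : ∀ j, v j = u (σ j) := by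
      intro j
      have : (t.orderIsoOfFin htc) ((t.orderIsoOfFin htc).toEquiv.symm
          ((Equiv.ofBijective _ hbij) j)) = (⟨v j, hv' j⟩ : t) := by
        simp [Equiv.ofBijective]
      simp only [hu, hσ, Equiv.trans_apply]
      rw [this]
    have : (fun k => b (v k)) = (fun k => b (u k)) ∘ σ := by
      funext k; simp [hvu k]
    rw [this, AlternatingMap.map_perm, hc u hum, smul_zero]
  obtain ⟨I, hI, hne⟩ := hex
  rw [formInner]
  refine Finset.sum_pos' (fun J _ => mul_self_nonneg _) ?_
  exact ⟨I, Finset.mem_filter.mpr ⟨Finset.mem_univ _, hI⟩, mul_self_pos.mpr hne⟩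

end Aux

theorem stmt1 {n q : ℕ} (hq : 1 ≤ q) (hqn : q ≤ n)
    {V : Type*} [NormedAddCommGroup V] [InnerProductSpace ℝ V]
    (b : OrthonormalBasis (Fin n) ℝ V)
    (A : V →ₗ[ℝ] V) (hA : ∀ v w : V, ⟪A v, w⟫ = ⟪v, A w⟫)
    (ρ : Fin n → ℝ) (hAb : ∀ i, A (b i) = ρ i • b i) :
    -- `⟨𝒜_q ω, ω⟩ ≥ ρ_(q) ‖ω‖²` for every alternating `q`-form `ω`
    (∀ ω : AlternatingMap ℝ V ℝ (Fin q),
      minSum n q ρ * formInner b ⇑ω ⇑ω ≤ formInner b (indA A ⇑ω) ⇑ω)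
    -- `ρ_(q)` is an eigenvalue of `𝒜_q` …
    ∧ (∃ ω : AlternatingMap ℝ V ℝ (Fin q), ω ≠ 0 ∧
        indA A ⇑ω = fun v => minSum n q ρ * ω v)
    -- … and it is the least one
    ∧ (∀ (μ : ℝ) (ω : AlternatingMap ℝ V ℝ (Fin q)), ω ≠ 0 →
        (indA A ⇑ω = fun v => μ * ω v) → minSum n q ρ ≤ μ) := by
  have part1 : ∀ ω : AlternatingMap ℝ V ℝ (Fin q),
      minSum n q ρ * formInner b ⇑ω ⇑ω ≤ formInner b (indA A ⇑ω) ⇑ω := by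
    intro ω
    rw [formInner, formInner, Finset.mul_sum]
    refine Finset.sum_le_sum fun I hI => ?_
    rw [indA_basis b A ρ hAb ω I, mul_assoc]
    refine mul_le_mul_of_nonneg_right ?_ (mul_self_nonneg _)
    have hIsm : StrictMono I := (Finset.mem_filter.mp hI).2
    have hcard : (Finset.image I Finset.univ).card = q := by
      rw [Finset.card_image_of_injective _ hIsm.injective, Finset.card_univ, Fintype.card_fin]
    calc minSum n q ρ ≤ ∑ i ∈ Finset.image I Finset.univ, ρ i := minSum_le ρ hcard
      _ = ∑ j, ρ (I j) := Finset.sum_image (fun a _ c _ h => hIsm.injective h)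
  refine ⟨part1, ?_, ?_⟩
  · -- eigenform
    obtain ⟨s, hs, hmin⟩ := minSum_mem hqn ρ
    set I₀ : Fin q → Fin n := fun k => ((s.orderIsoOfFin hs k : s) : Fin n) with hI₀
    have hI₀inj : Function.Injective I₀ := fun a c h =>
      (s.orderIsoOfFin hs).injective (Subtype.val_injective h)
    set L : V →ₗ[ℝ] (Fin q → ℝ) := LinearMap.pi fun k => b.toBasis.coord (I₀ k) with hL
    set ω₀ : AlternatingMap ℝ V ℝ (Fin q) := Matrix.detRowAlternating.compLinearMap L with hω₀def
    have hcoord : ∀ (i : Fin n) (k : Fin q),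
        L (b i) k = if i = I₀ k then (1:ℝ) else 0 := by
      intro i k
      have hb : b i = b.toBasis i := by simp
      simp only [hL, LinearMap.pi_apply, hb, Module.Basis.coord_apply, Module.Basis.repr_self,
        Finsupp.single_apply]
    have hval : ∀ J : Fin q → Fin n, ω₀ (fun k => b (J k))
        = (Matrix.of fun j k => if J j = I₀ k then (1:ℝ) else 0).det := by
      intro J
      have h1 : ω₀ (fun k => b (J k)) = (Matrix.of fun j k => L (b (J j)) k).det := rfl
      rw [h1]
      congr 1
      funext j k
      simp only [Matrix.of_apply]
      exact hcoord (J j) k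
    have hω₀ne : ω₀ ≠ 0 := by
      intro h
      have h1 : ω₀ (fun k => b (I₀ k)) = 1 := by
        rw [hval I₀]
        have : (Matrix.of fun j k => if I₀ j = I₀ k then (1:ℝ) else 0) = 1 := by
          ext j k
          simp [Matrix.one_apply, hI₀inj.eq_iff]
        rw [this, Matrix.det_one]
      rw [h] at h1
      simpa using h1
    have hsum : ∀ J : Fin q → Fin n, ω₀ (fun k => b (J k)) ≠ 0 →
        (∑ j, ρ (J j)) = ∑ i ∈ s, ρ i := by
      intro J hne
      have hJinj : Function.Injective J := by
        intro a c hac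
        by_contra hneq
        exact hne (ω₀.map_eq_zero_of_eq _ (by rw [hac] : b (J a) = b (J c)) hneq)
      have hmem : ∀ j, J j ∈ s := by
        intro j
        by_contra hj
        apply hne
        rw [hval J]
        refine Matrix.det_eq_zero_of_row_eq_zero j fun k => ?_
        simp only [Matrix.of_apply]
        rw [if_neg]
        intro h
        exact hj (h ▸ ((s.orderIsoOfFin hs k).coe_prop))
      have himg : Finset.image J Finset.univ = s := by
        refine Finset.eq_of_subset_of_card_le (fun i hi => ?_) ?_
        · obtain ⟨j, -, rfl⟩ := Finset.mem_image.mp hi; exact hmem j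
        · rw [Finset.card_image_of_injective _ hJinj, Finset.card_univ,
            Fintype.card_fin, hs]
      calc ∑ j, ρ (J j) = ∑ i ∈ Finset.image J Finset.univ, ρ i :=
            (Finset.sum_image (fun a _ c _ h => hJinj h)).symm
        _ = ∑ i ∈ s, ρ i := by rw [himg]
    refine ⟨ω₀, hω₀ne, ?_⟩
    have hMM : indAM A ω₀ = minSum n q ρ • ω₀.toMultilinearMap := by
      apply Module.Basis.ext_multilinear (fun _ => b.toBasis)
      intro J
      simp only [OrthonormalBasis.coe_toBasis, MultilinearMap.smul_apply,
        AlternatingMap.coe_multilinearMap, smul_eq_mul]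
      rw [show (indAM A ω₀) (fun i => b (J i)) = indA A ⇑ω₀ (fun i => b (J i)) from
        congrFun (indAM_coe A ω₀) _]
      rw [indA_basis b A ρ hAb ω₀ J]
      by_cases hz : ω₀ (fun i => b (J i)) = 0
      · rw [hz, mul_zero, mul_zero]
      · rw [hsum J hz, hmin]
    funext v
    rw [← indAM_coe A ω₀, hMM]
    simp
  · -- least eigenvalue
    intro μ ω hω heq
    have hpos := formInner_pos b hqn hω
    have h1 := part1 ω
    rw [heq] at h1
    have h2 : formInner b (fun v => μ * ω v) ⇑ω = μ * formInner b ⇑ω ⇑ω := by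
      rw [formInner, formInner, Finset.mul_sum]
      exact Finset.sum_congr rfl fun I _ => by ring
    rw [h2] at h1
    exact le_of_mul_le_mul_right h1 hpos
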